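/- Let δ ∈ (0,1), θ = (1 − √(1−(1−δ)²))/(1 + √(1−(1−δ)²)), η̃ ∈ [(1+θ)/2, 1), and define polynomials T_0(x) = T_1(x) = 1, T_{k+2}(x) = (1+η̃) x T_{k+1}(x) − η̃ T_k(x) for k ≥ 0. Then for all k ≥ 0 and all x ∈ [0, 1−δ]: T_k(x)² ≤ 7 η̃^k. -/
import Mathlib


set_option maxHeartbeats 1000000 in
/-- Loopless Chebyshev acceleration polynomial bound: with T₀ = T₁ = 1 and
T_{k+2}(x) = (1+η̃)x T_{k+1}(x) − η̃ T_k(x), for all k and all x ∈ [0, 1−δ],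
T_k(x)² ≤ 7 η̃^k. -/
theorem stmt12 (δ θ ηt : ℝ) (h0 : 0 < δ) (h1 : δ < 1)
    (hθ : θ = (1 - Real.sqrt (1 - (1 - δ) ^ 2)) / (1 + Real.sqrt (1 - (1 - δ) ^ 2)))
    (hη1 : (1 + θ) / 2 ≤ ηt) (hη2 : ηt < 1)
    (T : ℕ → ℝ → ℝ)
    (hT0 : ∀ x, T 0 x = 1) (hT1 : ∀ x, T 1 x = 1)
    (hTrec : ∀ k x, T (k + 2) x = (1 + ηt) * x * T (k + 1) x - ηt * T k x) :
    ∀ (k : ℕ) (x : ℝ), 0 ≤ x → x ≤ 1 - δ → (T k x) ^ 2 ≤ 7 * ηt ^ k := by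
  set s := Real.sqrt (1 - (1 - δ) ^ 2) with hs_def
  have ha : (0:ℝ) < 1 - (1 - δ) ^ 2 := by nlinarith
  have hs0 : 0 < s := Real.sqrt_pos.mpr ha
  have hs2 : s ^ 2 = 1 - (1 - δ) ^ 2 := Real.sq_sqrt ha.le
  have hs1 : s ≤ 1 := by nlinarith
  -- ηt ≥ 1/(1+s)
  have hηge : 1 ≤ ηt * (1 + s) := by
    have h : (1 + θ) / 2 = 1 / (1 + s) := by
      rw [hθ]; field_simp; ring
    rw [h] at hη1
    have h1s : (0:ℝ) < 1 + s := by linarith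
    calc (1:ℝ) = (1 / (1 + s)) * (1 + s) := by field_simp
    _ ≤ ηt * (1 + s) := by
      apply mul_le_mul_of_nonneg_right hη1 h1s.le
  have hηhalf : (1:ℝ)/2 ≤ ηt := by nlinarith
  have hηpos : (0:ℝ) < ηt := by linarith
  -- ηt * s ≥ 1 - ηt
  have hηs : 1 - ηt ≤ ηt * s := by nlinarith
  have hη2s : (1 - ηt)^2 ≤ (ηt * s)^2 := by nlinarith
  -- δ ≤ s²
  have hδs : δ ≤ s ^ 2 := by nlinarith
  -- cubic fact
  have hcubic : 0 ≤ (ηt - 1)^2 * (10 * ηt + 3) := by nlinarith [sq_nonneg (ηt - 1)]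
  -- endpoint inequality at x = 1 - δ
  have hF1 : 4 * (1 + ηt) * δ ≤ 7 * (4 * ηt - ((1 + ηt) * (1 - δ))^2) := by
    have h2 : 0 ≤ (3 + 7*ηt) * (1 + ηt) * ((ηt * s)^2 - (1 - ηt)^2) := by
      apply mul_nonneg; nlinarith; linarith
    have hη2pos : (0:ℝ) < ηt^2 := by positivity
    nlinarith [h2, hcubic, mul_pos hη2pos hη2pos, sq_nonneg (ηt*s)]
  -- key inequality for all x ∈ [0, 1-δ]
  have key : ∀ x : ℝ, 0 ≤ x → x ≤ 1 - δ →
      4 * (1 + ηt) * (1 - x) ≤ 7 * (4 * ηt - ((1 + ηt) * x)^2) := by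
    intro x hx0 hx1
    have hF0 : (0:ℝ) ≤ 24 * ηt - 4 := by linarith
    have hF1' : 0 ≤ 7 * (4 * ηt - ((1 + ηt) * (1 - δ))^2) - 4 * (1 + ηt) * δ := by
      linarith
    have hprod : 0 ≤ x * ((1 - δ) - x) := mul_nonneg hx0 (by linarith)
    have hgoal : 0 ≤ (1 - δ) * (7 * (4 * ηt - ((1 + ηt) * x)^2) - 4 * (1 + ηt) * (1 - x)) := by
      have e : (1 - δ) * (7 * (4 * ηt - ((1 + ηt) * x)^2) - 4 * (1 + ηt) * (1 - x))
          = ((1 - δ) - x) * (24 * ηt - 4)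
            + x * (7 * (4 * ηt - ((1 + ηt) * (1 - δ))^2) - 4 * (1 + ηt) * δ)
            + 7 * (1 + ηt)^2 * (1 - δ) * (x * ((1 - δ) - x)) := by ring
      rw [e]
      have t1 : 0 ≤ ((1 - δ) - x) * (24 * ηt - 4) :=
        mul_nonneg (by linarith) hF0
      have t2 : 0 ≤ x * (7 * (4 * ηt - ((1 + ηt) * (1 - δ))^2) - 4 * (1 + ηt) * δ) :=
        mul_nonneg hx0 hF1'
      have t3 : 0 ≤ 7 * (1 + ηt)^2 * (1 - δ) * (x * ((1 - δ) - x)) := by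
        apply mul_nonneg _ hprod
        have : (0:ℝ) ≤ (1 + ηt)^2 := sq_nonneg _
        nlinarith
      linarith
    have h1δ : (0:ℝ) < 1 - δ := by linarith
    nlinarith [mul_pos h1δ h1δ, hgoal]
  intro k x hx0 hx1
  -- the invariant
  have hQ : ∀ n : ℕ, T (n+1) x ^ 2 - (1 + ηt) * x * T (n+1) x * T n x + ηt * T n x ^ 2
      = ηt ^ n * ((1 + ηt) * (1 - x)) := by
    intro n
    induction n with
    | zero => rw [hT0, hT1]; ring
    | succ m ih =>
      rw [show m + 1 + 1 = m + 2 from rfl, hTrec m x]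
      linear_combination ηt * ih
  have hkey := key x hx0 hx1
  have hdpos : 0 < 4 * ηt - ((1 + ηt) * x) ^ 2 := by nlinarith
  match k with
  | 0 => rw [hT0]; norm_num
  | (n+1) =>
    have hQn : 4 * ηt * (T (n+1) x ^ 2 - (1 + ηt) * x * T (n+1) x * T n x + ηt * T n x ^ 2)
        = 4 * ηt * (ηt ^ n * ((1 + ηt) * (1 - x))) := by rw [hQ n]
    have hsq : 0 ≤ ((1 + ηt) * x * T (n+1) x - 2 * ηt * T n x) ^ 2 := sq_nonneg _
    have hpow : (0:ℝ) ≤ ηt ^ n := pow_nonneg hηpos.le n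
    have h1 : (4 * ηt - ((1 + ηt) * x) ^ 2) * T (n+1) x ^ 2
        ≤ (4 * ηt - ((1 + ηt) * x) ^ 2) * (7 * ηt ^ (n+1)) := by
      have e1 : (4 * ηt - ((1 + ηt) * x) ^ 2) * T (n+1) x ^ 2
          ≤ 4 * ηt * (ηt ^ n * ((1 + ηt) * (1 - x))) := by nlinarith [hQn, hsq]
      have e2 : 4 * ηt * (ηt ^ n * ((1 + ηt) * (1 - x)))
          ≤ (4 * ηt - ((1 + ηt) * x) ^ 2) * (7 * ηt ^ (n+1)) := by
        have h3 := mul_le_mul_of_nonneg_left hkey (mul_nonneg hηpos.le hpow)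
        have e3 : (4 * ηt - ((1 + ηt) * x) ^ 2) * (7 * ηt ^ (n+1))
            = ηt * ηt ^ n * (7 * (4 * ηt - ((1 + ηt) * x) ^ 2)) := by
          rw [pow_succ]; ring
        have e4 : 4 * ηt * (ηt ^ n * ((1 + ηt) * (1 - x)))
            = ηt * ηt ^ n * (4 * (1 + ηt) * (1 - x)) := by ring
        rw [e3, e4]; exact h3
      linarith
    exact le_of_mul_le_mul_left h1 hdpos
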